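/- Under the balanced two-arm design, the treatment-effect variance of the straPP estimator has the closed form: the (1,1) diagonal entry (indexing the treatment coefficient) of σ₁²·Σ̃·(X₁ᵀX₁ + a₀²X₀ᵀX₀)·Σ̃, where Σ̃ = (X₁ᵀX₁ + a₀X₀ᵀX₀)⁻¹, equals 4σ₁²(n₁ + a₀²n₀)/(n₁ + a₀n₀)². -/

import Mathlib

open Matrix

noncomputable section

/-- The design cross-product shape for the balanced two-arm design (intercept plus treatment
indicator, half the subjects treated): `X₀ᵀX₀ = (n₀/2)·M` and `X₁ᵀX₁ = (n₁/2)·M` with `M` the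
matrix with rows `(2,1)` and `(1,1)`. -/
def balM : Matrix (Fin 2) (Fin 2) ℝ := !![2, 1; 1, 1]

lemma balM_inv (c : ℝ) (hc : c ≠ 0) :
    (c • balM)⁻¹ = c⁻¹ • !![(1:ℝ), -1; -1, 2] := by
  apply Matrix.inv_eq_right_inv
  rw [Matrix.smul_mul, Matrix.mul_smul, smul_smul, mul_inv_cancel₀ hc]
  show (1:ℝ) • (balM * !![(1:ℝ), -1; -1, 2]) = 1
  rw [one_smul, balM]
  ext i j
  fin_cases i <;> fin_cases j <;>
    simp [Matrix.mul_apply, Fin.sum_univ_two, Matrix.one_apply] <;> norm_num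

/-- Under the balanced two-arm design, the treatment-effect variance of the straPP estimator
has the closed form: the `(1,1)` diagonal entry (indexing the treatment coefficient) of
`σ₁²·Σ̃·(X₁ᵀX₁ + a₀²X₀ᵀX₀)·Σ̃`, where `Σ̃ = (X₁ᵀX₁ + a₀X₀ᵀX₀)⁻¹`, equals
`4σ₁²(n₁ + a₀²n₀)/(n₁ + a₀n₀)²`. -/
theorem strapp_variance_balanced_design (n₀ n₁ σ₀ σ₁ a₀ : ℝ)
    (hn₀ : 0 < n₀) (hn₁ : 0 < n₁) (hσ₀ : 0 < σ₀) (hσ₁ : 0 < σ₁)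
    (ha₀ : 0 < a₀) (ha₀' : a₀ ≤ 1) :
    (σ₁ ^ 2 • (((n₁ / 2) • balM + a₀ • ((n₀ / 2) • balM))⁻¹
        * ((n₁ / 2) • balM + a₀ ^ 2 • ((n₀ / 2) • balM))
        * ((n₁ / 2) • balM + a₀ • ((n₀ / 2) • balM))⁻¹)) 1 1
      = 4 * σ₁ ^ 2 * (n₁ + a₀ ^ 2 * n₀) / (n₁ + a₀ * n₀) ^ 2 := by
  have hc : (n₁ / 2 + a₀ * (n₀ / 2)) ≠ 0 := by positivity
  have h1 : (n₁ / 2) • balM + a₀ • ((n₀ / 2) • balM)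
      = (n₁ / 2 + a₀ * (n₀ / 2)) • balM := by
    rw [smul_smul, add_smul]
  rw [h1, balM_inv _ hc]
  simp only [Matrix.smul_apply, Matrix.mul_apply, Fin.sum_univ_two, Matrix.add_apply,
    Matrix.smul_apply, balM, Matrix.cons_val', Matrix.cons_val_zero, Matrix.cons_val_one,
    Matrix.head_cons, Matrix.head_fin_const, Matrix.empty_val', Matrix.cons_val_fin_one,
    smul_eq_mul, Matrix.of_apply]
  field_simp
  ring
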